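/- Let ε ∈ [0,1] and ρ ∈ (0,1), let U, V be independent standard normal random variables, and let L₁ := 1 − ε + ε(1−ρ²)^{−1/2} exp(−ρU²/(2(1−ρ)) + ρV²/(2(1+ρ))). Then for every t ≥ 0, the truncated second moment satisfies E[L₁² · 1{|V| ≤ t}] ≤ 1 − ε² + ε² (1−ρ)^{−1/2} (1+ρ)^{−3/2} · (2t/√(2π)). -/

import Mathlib

open MeasureTheory ProbabilityTheory Real Filter Topology

noncomputable section

/-- The standard normal distribution on ℝ. -/
def stdGauss : Measure ℝ := gaussianReal 0 1

/-- Two independent standard normals. -/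
def stdGauss2 : Measure (ℝ × ℝ) := stdGauss.prod stdGauss

/-- `N(0, Σ_ρ)`: the centered bivariate normal with unit marginal variances and
correlation `ρ`, i.e. the law of `(Z₁, ρ Z₁ + √(1-ρ²) Z₂)` for independent standard
normal `Z₁, Z₂`. -/
def biNormal (ρ : ℝ) : Measure (ℝ × ℝ) :=
  stdGauss2.map fun z => (z.1, ρ * z.1 + Real.sqrt (1 - ρ ^ 2) * z.2)

/-- The contamination mixture `P_{ε,ρ} = (1-ε) N(0,Σ₀) + ε N(0,Σ_ρ)`. -/
def mixture (ε ρ : ℝ) : Measure (ℝ × ℝ) :=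
  ENNReal.ofReal (1 - ε) • biNormal 0 + ENNReal.ofReal ε • biNormal ρ

/-- The `n`-fold product (i.i.d.) measure. -/
def iid (n : ℕ) (μ : Measure (ℝ × ℝ)) : Measure (Fin n → ℝ × ℝ) :=
  Measure.pi fun _ => μ
/-- The single-observation likelihood ratio `dP_{ε,ρ}/dN(0,Σ₀)` in the rotated
coordinates `U = (X-Y)/√2`, `V = (X+Y)/√2`, evaluated at `p = (U,V)`. -/
def L1 (ε ρ : ℝ) (p : ℝ × ℝ) : ℝ :=
  1 - ε + ε * (Real.sqrt (1 - ρ ^ 2))⁻¹ *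
    Real.exp (-(ρ * p.1 ^ 2) / (2 * (1 - ρ)) + ρ * p.2 ^ 2 / (2 * (1 + ρ)))

def phiN : ℝ → NNReal := fun x => Real.toNNReal ((Real.sqrt (2*π))⁻¹ * Real.exp (-x^2/2))

lemma phiN_meas : Measurable phiN := by
  apply Measurable.real_toNNReal; fun_prop

lemma phiN_coe (x : ℝ) : (phiN x : ℝ) = (Real.sqrt (2*π))⁻¹ * Real.exp (-x^2/2) := by
  rw [phiN, Real.coe_toNNReal]; positivity

lemma stdGauss_eq : stdGauss = volume.withDensity (fun x => (phiN x : ENNReal)) := by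
  rw [stdGauss, gaussianReal_of_var_ne_zero _ one_ne_zero]
  congr 1
  ext x
  show gaussianPDF 0 1 x = ENNReal.ofReal _
  rw [gaussianPDF_def]
  simp only [gaussianPDFReal]
  norm_num

lemma integral_stdGauss (f : ℝ → ℝ) :
    ∫ x, f x ∂stdGauss = ∫ x, ((Real.sqrt (2*π))⁻¹ * Real.exp (-x^2/2)) * f x := by
  rw [stdGauss_eq, integral_withDensity_eq_integral_smul phiN_meas]
  simp_rw [NNReal.smul_def, smul_eq_mul, phiN_coe]

lemma setIntegral_stdGauss (f : ℝ → ℝ) {s : Set ℝ} (hs : MeasurableSet s) :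
    ∫ x in s, f x ∂stdGauss = ∫ x in s, ((Real.sqrt (2*π))⁻¹ * Real.exp (-x^2/2)) * f x := by
  rw [stdGauss_eq, setIntegral_withDensity_eq_setIntegral_smul phiN_meas _ hs]
  simp_rw [NNReal.smul_def, smul_eq_mul, phiN_coe]

lemma integrable_exp_sq_stdGauss {c : ℝ} (hc : c < 1/2) :
    Integrable (fun x => Real.exp (c * x^2)) stdGauss := by
  rw [stdGauss_eq, integrable_withDensity_iff_integrable_smul phiN_meas]
  have : (fun x => phiN x • Real.exp (c * x^2))
      = fun x => (Real.sqrt (2*π))⁻¹ * Real.exp (-(1/2 - c) * x^2) := by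
    ext x
    rw [NNReal.smul_def, smul_eq_mul, phiN_coe, mul_assoc, ← Real.exp_add]
    ring_nf
  rw [this]
  exact (integrable_exp_neg_mul_sq (by linarith)).const_mul _

lemma integral_exp_sq_stdGauss {c : ℝ} (hc : c < 1/2) :
    ∫ x, Real.exp (c * x^2) ∂stdGauss = (Real.sqrt (1 - 2*c))⁻¹ := by
  rw [integral_stdGauss]
  have h1 : ∀ x : ℝ, ((Real.sqrt (2*π))⁻¹ * Real.exp (-x^2/2)) * Real.exp (c * x^2)
      = (Real.sqrt (2*π))⁻¹ * Real.exp (-(1/2 - c) * x^2) := by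
    intro x
    rw [mul_assoc, ← Real.exp_add]
    ring_nf
  simp_rw [h1]
  rw [integral_const_mul, integral_gaussian]
  have hb : (0:ℝ) < 1/2 - c := by linarith
  rw [← Real.sqrt_inv, ← Real.sqrt_inv (1-2*c), ← Real.sqrt_mul (by positivity)]
  congr 1
  have hπ := Real.pi_pos
  have hb' : (1:ℝ)/2 - c ≠ 0 := hb.ne'
  have hπ' : π ≠ 0 := hπ.ne'
  rw [eq_comm, inv_eq_iff_eq_inv, eq_comm, mul_inv, inv_inv, inv_div]
  field_simp

lemma setIntegral_exp_sq_nonneg (c t : ℝ) :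
    0 ≤ ∫ x in Set.Icc (-t) t, Real.exp (c * x^2) ∂stdGauss :=
  integral_nonneg fun x => (Real.exp_pos _).le

lemma setIntegral_exp_sq_le_full {c : ℝ} (hc : c < 1/2) (t : ℝ) :
    ∫ x in Set.Icc (-t) t, Real.exp (c * x^2) ∂stdGauss ≤ (Real.sqrt (1 - 2*c))⁻¹ :=
  le_trans (setIntegral_le_integral (integrable_exp_sq_stdGauss hc)
    (ae_of_all _ fun x => (Real.exp_pos _).le)) (le_of_eq (integral_exp_sq_stdGauss hc))

lemma setIntegral_exp_sq_le_lin {c : ℝ} (hc : c ≤ 1/2) {t : ℝ} (ht : 0 ≤ t) :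
    ∫ x in Set.Icc (-t) t, Real.exp (c * x^2) ∂stdGauss ≤ 2 * t / Real.sqrt (2*π) := by
  rw [setIntegral_stdGauss _ measurableSet_Icc]
  have hle : ∀ x ∈ Set.Icc (-t) t,
      ((Real.sqrt (2*π))⁻¹ * Real.exp (-x^2/2)) * Real.exp (c * x^2) ≤ (Real.sqrt (2*π))⁻¹ := by
    intro x _
    rw [mul_assoc, ← Real.exp_add]
    have h1 : -x^2/2 + c * x^2 ≤ 0 := by nlinarith [sq_nonneg x]
    calc (Real.sqrt (2*π))⁻¹ * Real.exp (-x^2/2 + c * x^2)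
        ≤ (Real.sqrt (2*π))⁻¹ * 1 := by
          have := Real.exp_le_one_iff.mpr h1
          gcongr
      _ = (Real.sqrt (2*π))⁻¹ := mul_one _
  have hvol : volume (Set.Icc (-t) t) < ⊤ := by
    rw [Real.volume_Icc]; exact ENNReal.ofReal_lt_top
  have hint1 : IntegrableOn (fun x => ((Real.sqrt (2*π))⁻¹ * Real.exp (-x^2/2)) * Real.exp (c * x^2))
      (Set.Icc (-t) t) volume := by
    apply Continuous.integrableOn_Icc; fun_prop
  have hint2 : IntegrableOn (fun _ : ℝ => (Real.sqrt (2*π))⁻¹) (Set.Icc (-t) t) volume :=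
    integrableOn_const hvol.ne
  calc ∫ x in Set.Icc (-t) t, ((Real.sqrt (2*π))⁻¹ * Real.exp (-x^2/2)) * Real.exp (c * x^2)
      ≤ ∫ _ in Set.Icc (-t) t, (Real.sqrt (2*π))⁻¹ :=
        setIntegral_mono_on hint1 hint2 measurableSet_Icc hle
    _ = (2 * t) * (Real.sqrt (2*π))⁻¹ := by
        rw [setIntegral_const, measureReal_def, Real.volume_Icc, smul_eq_mul,
          ENNReal.toReal_ofReal (by linarith)]
        ring_nf
    _ = 2 * t / Real.sqrt (2*π) := by rw [div_eq_mul_inv]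


/-- the truncated second moment of the single-observation likelihood ratio
under the null satisfies
`E[L₁² · 1{|V| ≤ t}] ≤ 1 - ε² + ε² (1-ρ)^{-1/2} (1+ρ)^{-3/2} · 2t/√(2π)`. -/
theorem truncated_second_moment_L1 (ε ρ : ℝ) (hε : ε ∈ Set.Icc (0 : ℝ) 1)
    (hρ : ρ ∈ Set.Ioo (0 : ℝ) 1) (t : ℝ) (ht : 0 ≤ t) :
    ∫ p in {p : ℝ × ℝ | |p.2| ≤ t}, (L1 ε ρ p) ^ 2 ∂stdGauss2
      ≤ 1 - ε ^ 2 + ε ^ 2 * (1 - ρ) ^ (-(1 : ℝ) / 2) * (1 + ρ) ^ (-(3 : ℝ) / 2)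
          * (2 * t / Real.sqrt (2 * π)) := by
  obtain ⟨hε0, hε1⟩ := hε
  obtain ⟨hρ0, hρ1⟩ := hρ
  have h1ε : (0:ℝ) ≤ 1 - ε := by linarith
  have h1ρ : (0:ℝ) < 1 - ρ := by linarith
  have h1ρ' : (0:ℝ) < 1 + ρ := by linarith
  haveI : IsProbabilityMeasure stdGauss := by unfold stdGauss; infer_instance
  set s1 := Real.sqrt (1-ρ) with hs1
  set s2 := Real.sqrt (1+ρ) with hs2
  have hs1p : 0 < s1 := Real.sqrt_pos.mpr h1ρ
  have hs2p : 0 < s2 := Real.sqrt_pos.mpr h1ρ'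
  have hsql : Real.sqrt (1-ρ^2) = s1 * s2 := by
    rw [show (1:ℝ)-ρ^2 = (1-ρ)*(1+ρ) by ring, Real.sqrt_mul h1ρ.le]
  set a : ℝ := -(ρ/(2*(1-ρ))) with ha
  set b : ℝ := ρ/(2*(1+ρ)) with hb
  have hapos : 0 < ρ/(2*(1-ρ)) := by positivity
  have hahalf : a < 1/2 := by rw [ha]; linarith
  have ha2 : 2*a < 1/2 := by rw [ha]; linarith
  have h2b : 2*b = ρ/(1+ρ) := by rw [hb]; field_simp
  have hbhalf : b < 1/2 := by
    rw [hb, div_lt_iff₀ (by linarith : (0:ℝ) < 2*(1+ρ))]; linarith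
  have hb2 : 2*b < 1/2 := by
    rw [h2b, div_lt_iff₀ h1ρ']; linarith
  -- rewrite the rpow coefficients
  have r1 : (1-ρ) ^ (-(1:ℝ)/2) = s1⁻¹ := by
    rw [neg_div, Real.rpow_neg h1ρ.le, hs1, Real.sqrt_eq_rpow]
  have r2 : (1+ρ) ^ (-(3:ℝ)/2) = (s2⁻¹)^3 := by
    rw [show (-(3:ℝ)/2) = (-(1)/2) * (3:ℕ) by norm_num, Real.rpow_mul h1ρ'.le,
      neg_div, Real.rpow_neg h1ρ'.le, hs2, Real.sqrt_eq_rpow, Real.rpow_natCast]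
  rw [r1, r2]
  -- the set and the restricted measure
  set ν := stdGauss.restrict (Set.Icc (-t) t) with hν
  have hset : {p : ℝ×ℝ | |p.2| ≤ t} = Set.univ ×ˢ Set.Icc (-t) t := by
    ext p; simp [abs_le]
  have hrestrict : stdGauss2.restrict {p : ℝ×ℝ | |p.2| ≤ t} = stdGauss.prod ν := by
    rw [hset, stdGauss2, ← Measure.prod_restrict, Measure.restrict_univ]
  -- pointwise expansion
  have hpt : ∀ p : ℝ×ℝ, L1 ε ρ p ^ 2
      = (1-ε)^2
        + (2*(1-ε)*ε*(s1*s2)⁻¹) * (Real.exp (a*p.1^2) * Real.exp (b*p.2^2))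
        + (ε^2*((s1*s2)⁻¹)^2) * (Real.exp ((2*a)*p.1^2) * Real.exp ((2*b)*p.2^2)) := by
    intro p
    have e1 : Real.exp (a*p.1^2) * Real.exp (b*p.2^2)
        = Real.exp (-(ρ * p.1 ^ 2) / (2 * (1 - ρ)) + ρ * p.2 ^ 2 / (2 * (1 + ρ))) := by
      rw [← Real.exp_add]; congr 1; rw [ha, hb]; ring
    have e2 : Real.exp ((2*a)*p.1^2) * Real.exp ((2*b)*p.2^2)
        = Real.exp (-(ρ * p.1 ^ 2) / (2 * (1 - ρ)) + ρ * p.2 ^ 2 / (2 * (1 + ρ))) ^ 2 := by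
      conv_rhs => rw [pow_two, ← Real.exp_add]
      rw [← Real.exp_add]; congr 1; rw [ha, hb]; ring
    rw [L1, hsql, e1, e2]; ring
  -- integrability
  have ig1 : Integrable (fun u => Real.exp (a*u^2)) stdGauss := integrable_exp_sq_stdGauss hahalf
  have ig2 : Integrable (fun u => Real.exp ((2*a)*u^2)) stdGauss := integrable_exp_sq_stdGauss ha2
  have ih1 : Integrable (fun v => Real.exp (b*v^2)) ν := (integrable_exp_sq_stdGauss hbhalf).restrict
  have ih2 : Integrable (fun v => Real.exp ((2*b)*v^2)) ν := (integrable_exp_sq_stdGauss hb2).restrict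
  have iT2 : Integrable (fun p : ℝ×ℝ => Real.exp (a*p.1^2) * Real.exp (b*p.2^2))
      (stdGauss.prod ν) := ig1.mul_prod ih1
  have iT3 : Integrable (fun p : ℝ×ℝ => Real.exp ((2*a)*p.1^2) * Real.exp ((2*b)*p.2^2))
      (stdGauss.prod ν) := ig2.mul_prod ih2
  -- compute the integral
  have hint : ∫ p in {p : ℝ×ℝ | |p.2| ≤ t}, (L1 ε ρ p) ^ 2 ∂stdGauss2
      = ((stdGauss.prod ν) Set.univ).toReal * (1-ε)^2
        + (2*(1-ε)*ε*(s1*s2)⁻¹) * ((∫ u, Real.exp (a*u^2) ∂stdGauss) * (∫ v, Real.exp (b*v^2) ∂ν))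
        + (ε^2*((s1*s2)⁻¹)^2) * ((∫ u, Real.exp ((2*a)*u^2) ∂stdGauss) * (∫ v, Real.exp ((2*b)*v^2) ∂ν)) := by
    have iSum : Integrable (fun p : ℝ×ℝ => (1-ε)^2
        + (2*(1-ε)*ε*(s1*s2)⁻¹) * (Real.exp (a*p.1^2) * Real.exp (b*p.2^2)))
        (stdGauss.prod ν) := (integrable_const _).add (iT2.const_mul _)
    rw [hrestrict]
    simp_rw [hpt]
    rw [integral_add iSum (iT3.const_mul _),
      integral_add (integrable_const _) (iT2.const_mul _),
      integral_const, measureReal_def, smul_eq_mul, integral_const_mul, integral_const_mul,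
      integral_prod_mul (fun u => Real.exp (a*u^2)) (fun v => Real.exp (b*v^2)),
      integral_prod_mul (fun u => Real.exp ((2*a)*u^2)) (fun v => Real.exp ((2*b)*v^2))]
  rw [hint]
  have v1 : ∫ u, Real.exp (a*u^2) ∂stdGauss = s1 := by
    rw [integral_exp_sq_stdGauss hahalf,
      show 1-2*a = (1-ρ)⁻¹ by rw [ha]; field_simp [h1ρ.ne']; ring, Real.sqrt_inv, inv_inv]
  have v2 : ∫ u, Real.exp ((2*a)*u^2) ∂stdGauss = s1/s2 := by
    rw [integral_exp_sq_stdGauss ha2,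
      show 1-2*(2*a) = (1+ρ)/(1-ρ) by rw [ha]; field_simp [h1ρ.ne']; ring,
      Real.sqrt_div h1ρ'.le, inv_div]
  have w1 : ∫ v, Real.exp (b*v^2) ∂ν ≤ s2 := by
    have h := setIntegral_exp_sq_le_full hbhalf t
    rwa [show 1-2*b = (1+ρ)⁻¹ by rw [hb]; field_simp [h1ρ'.ne']; ring, Real.sqrt_inv, inv_inv] at h
  have w1' : (0:ℝ) ≤ ∫ v, Real.exp (b*v^2) ∂ν := setIntegral_exp_sq_nonneg _ _
  have w2 : ∫ v, Real.exp ((2*b)*v^2) ∂ν ≤ 2*t/Real.sqrt (2*π) :=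
    setIntegral_exp_sq_le_lin hb2.le ht
  have w2' : (0:ℝ) ≤ ∫ v, Real.exp ((2*b)*v^2) ∂ν := setIntegral_exp_sq_nonneg _ _
  have hm1 : ((stdGauss.prod ν) Set.univ).toReal ≤ 1 := by
    have h : (stdGauss.prod ν) Set.univ ≤ 1 := by
      rw [← Set.univ_prod_univ, Measure.prod_prod, measure_univ, one_mul, hν,
        Measure.restrict_apply_univ]
      exact prob_le_one
    calc ((stdGauss.prod ν) Set.univ).toReal ≤ (1:ENNReal).toReal :=
          ENNReal.toReal_mono ENNReal.one_ne_top h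
      _ = 1 := by simp
  rw [v1, v2]
  have hBnn : (0:ℝ) ≤ 2*(1-ε)*ε*(s1*s2)⁻¹ :=
    mul_nonneg (mul_nonneg (by linarith) hε0) (by positivity)
  have hCnn : (0:ℝ) ≤ ε^2*((s1*s2)⁻¹)^2 := by positivity
  calc ((stdGauss.prod ν) Set.univ).toReal * (1-ε)^2
        + (2*(1-ε)*ε*(s1*s2)⁻¹) * (s1 * ∫ v, Real.exp (b*v^2) ∂ν)
        + (ε^2*((s1*s2)⁻¹)^2) * ((s1/s2) * ∫ v, Real.exp ((2*b)*v^2) ∂ν)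
      ≤ 1*(1-ε)^2 + (2*(1-ε)*ε*(s1*s2)⁻¹) * (s1*s2)
        + (ε^2*((s1*s2)⁻¹)^2) * ((s1/s2)*(2*t/Real.sqrt (2*π))) := by
        gcongr <;> first | assumption | positivity
    _ = 1-ε^2 + ε^2*s1⁻¹*(s2⁻¹)^3*(2*t/Real.sqrt (2*π)) := by
        rw [one_mul, show (2*(1-ε)*ε*(s1*s2)⁻¹) * (s1*s2) = 2*(1-ε)*ε by field_simp,
          show (ε^2*((s1*s2)⁻¹)^2) * ((s1/s2)*(2*t/Real.sqrt (2*π)))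
            = ε^2*s1⁻¹*(s2⁻¹)^3*(2*t/Real.sqrt (2*π)) by field_simp]
        ring
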